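/- For every unweighted undirected simple graph G on n ≥ 2 vertices, there exists a 4-additive spanner H of G containing at most C · n^{7/5} · (log n)^{3/5} edges, where C is an absolute constant independent of G and n. -/

import Mathlib

/-- `H` is a `k`-additive spanner of `G`: a spanning subgraph preserving all
pairwise (extended) distances up to additive error `k`. -/
def IsAdditiveSpanner {V : Type*} (G H : SimpleGraph V) (k : ℕ) : Prop :=
  H ≤ G ∧ ∀ u v : V, H.edist u v ≤ G.edist u v + k

open SimpleGraph

open Finset in
lemma greedy_step {V : Type*} [Fintype V] [DecidableEq V] {D : ℕ}
    (F : Finset (Finset V)) (hne : F.Nonempty) (hD : 1 ≤ D) (hF : ∀ S ∈ F, D ≤ S.card) :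
    ∃ x : V, F.card * D ≤ (F.filter (fun S => x ∈ S)).card * Fintype.card V := by
  classical
  have hVne : Nonempty V := by
    obtain ⟨S, hS⟩ := hne
    have : S.Nonempty := Finset.card_pos.mp (lt_of_lt_of_le hD (hF S hS))
    exact ⟨this.choose⟩
  obtain ⟨x0, -, hx0⟩ := Finset.exists_max_image (Finset.univ : Finset V)
    (fun x => (F.filter (fun S => x ∈ S)).card) Finset.univ_nonempty
  refine ⟨x0, ?_⟩
  have swap : ∑ x : V, (F.filter (fun S => x ∈ S)).card = ∑ S ∈ F, S.card := by
    have h1 : ∀ x : V, (F.filter (fun S => x ∈ S)).card = ∑ S ∈ F, if x ∈ S then 1 else 0 :=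
      fun x => Finset.card_filter _ _
    have h2 : ∀ S : Finset V, S.card = ∑ x : V, if x ∈ S then 1 else 0 := by
      intro S
      rw [Finset.sum_ite_mem, Finset.univ_inter]
      exact Finset.card_eq_sum_ones S
    simp_rw [h1]
    rw [Finset.sum_comm]
    exact Finset.sum_congr rfl (fun S _ => (h2 S).symm)
  have key : F.card * D ≤ ∑ x : V, (F.filter (fun S => x ∈ S)).card := by
    rw [swap]
    calc F.card * D = ∑ _S ∈ F, D := by simp [mul_comm]
      _ ≤ ∑ S ∈ F, S.card := Finset.sum_le_sum hF
  refine key.trans ?_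
  calc ∑ x : V, (F.filter (fun S => x ∈ S)).card
      ≤ ∑ _x : V, (F.filter (fun S => x0 ∈ S)).card :=
        Finset.sum_le_sum (fun x _ => hx0 x (Finset.mem_univ x))
    _ = (F.filter (fun S => x0 ∈ S)).card * Fintype.card V := by
        rw [Finset.sum_const, smul_eq_mul, Finset.card_univ, mul_comm]

lemma hit_aux {V : Type*} [Fintype V] [DecidableEq V] {D : ℕ} (hD : 1 ≤ D) :
    ∀ (k : ℕ) (F : Finset (Finset V)), (∀ S ∈ F, D ≤ S.card) →
      F.card * (Fintype.card V - D) ^ k < (Fintype.card V) ^ k →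
      ∃ R : Finset V, R.card ≤ k ∧ ∀ S ∈ F, ∃ x ∈ R, x ∈ S := by
  classical
  intro k
  induction k with
  | zero =>
    intro F hF hlt
    simp only [pow_zero, mul_one, Nat.lt_one_iff, Finset.card_eq_zero] at hlt
    exact ⟨∅, le_refl _, by simp [hlt]⟩
  | succ k ih =>
    intro F hF hlt
    rcases F.eq_empty_or_nonempty with rfl | hne
    · exact ⟨∅, by simp, by simp⟩
    obtain ⟨x0, hx0⟩ := greedy_step F hne hD hF
    set n := Fintype.card V with hn
    have hDn : D ≤ n := le_trans (hF hne.choose hne.choose_spec) (Finset.card_le_univ _)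
    set F' := F.filter (fun S => x0 ∉ S) with hF'
    set a := (F.filter (fun S => x0 ∈ S)).card with ha
    have hsplit : a + F'.card = F.card := by
      rw [ha, hF']
      exact Finset.card_filter_add_card_filter_not _
    obtain ⟨m, hm⟩ : ∃ m, n = m + D := ⟨n - D, (Nat.sub_add_cancel hDn).symm⟩
    have hstep : n * F'.card ≤ F.card * (n - D) := by
      rw [← hsplit] at hx0 ⊢
      rw [hm] at hx0 ⊢
      rw [Nat.add_sub_cancel]
      nlinarith [hx0]
    have hlt' : F'.card * (n - D) ^ k < n ^ k := by
      have h1 : (n * F'.card) * (n-D)^k ≤ (F.card * (n - D)) * (n-D)^k :=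
        Nat.mul_le_mul_right _ hstep
      have h3 : n * (F'.card * (n - D) ^ k) < n * n ^ k := by
        calc n * (F'.card * (n - D) ^ k) = (n * F'.card) * (n-D)^k := by ring
          _ ≤ (F.card * (n - D)) * (n-D)^k := h1
          _ = F.card * (n-D)^(k+1) := by ring
          _ < n^(k+1) := hlt
          _ = n * n^k := by ring
      exact lt_of_mul_lt_mul_left h3 (Nat.zero_le n)
    obtain ⟨R', hR'c, hR'⟩ := ih F' (fun S hS => hF S (Finset.mem_filter.mp hS).1) hlt'
    refine ⟨insert x0 R', (Finset.card_insert_le _ _).trans (by omega), ?_⟩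
    intro S hS
    by_cases hx : x0 ∈ S
    · exact ⟨x0, Finset.mem_insert_self _ _, hx⟩
    · obtain ⟨x, hxR, hxS⟩ := hR' S (Finset.mem_filter.mpr ⟨hS, hx⟩)
      exact ⟨x, Finset.mem_insert_of_mem hxR, hxS⟩

lemma hitting {V : Type*} [Fintype V] [DecidableEq V] {D : ℕ} (hD : 1 ≤ D)
    (F : Finset (Finset V)) (hF : ∀ S ∈ F, D ≤ S.card) :
    ∃ R : Finset V, (∀ S ∈ F, ∃ x ∈ R, x ∈ S) ∧
      (R.card : ℝ) ≤ ((Fintype.card V : ℝ) / D) * Real.log F.card + 2 := by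
  classical
  rcases F.eq_empty_or_nonempty with rfl | hne
  · exact ⟨∅, by simp, by simp⟩
  set n := Fintype.card V with hn
  have hm1 : 1 ≤ F.card := Finset.card_pos.mpr hne
  have hDn : D ≤ n := le_trans (hF hne.choose hne.choose_spec) (Finset.card_le_univ _)
  have hn1 : 1 ≤ n := le_trans hD hDn
  set y : ℝ := ((n : ℝ) / D) * Real.log F.card with hy
  have hy0 : 0 ≤ y := by
    apply mul_nonneg (by positivity)
    exact Real.log_nonneg (by exact_mod_cast hm1)
  set k := ⌈y⌉₊ + 1 with hk
  have hky : (k : ℝ) ≤ y + 2 := by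
    rw [hk]
    push_cast
    have := Nat.ceil_lt_add_one hy0
    linarith
  have hmain : F.card * (n - D) ^ k < n ^ k := by
    rcases eq_or_lt_of_le hDn with heq | hDlt
    · have h0 : n - D = 0 := by omega
      rw [h0, zero_pow (by omega : k ≠ 0), mul_zero]
      exact pow_pos (by omega : 0 < n) k
    · -- real-number argument
      have hcast : ((n - D : ℕ) : ℝ) = (n : ℝ) - D := Nat.cast_sub hDn
      rw [← Nat.cast_lt (α := ℝ)]
      push_cast [hcast]
      have hnpos : (0:ℝ) < n := by exact_mod_cast hn1
      have hDpos : (0:ℝ) < D := by exact_mod_cast hD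
      have hx1 : (n:ℝ) - D = n * (1 - D / n) := by field_simp
      have hexp : (1 : ℝ) - (D:ℝ)/n ≤ Real.exp (-((D:ℝ)/n)) := by
        have := Real.add_one_le_exp (-((D:ℝ)/n))
        linarith
      have hnd0 : (0:ℝ) ≤ 1 - (D:ℝ)/n := by
        rw [sub_nonneg, div_le_one hnpos]
        exact_mod_cast hDn
      have h1 : ((n:ℝ) - D)^k ≤ n^k * Real.exp (-((D:ℝ)/n))^k := by
        rw [hx1, mul_pow]
        gcongr
      have h2 : (F.card : ℝ) * Real.exp (-((D:ℝ)/n))^k < 1 := by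
        rw [← Real.exp_nat_mul]
        have hlog : Real.log F.card < (k : ℝ) * ((D:ℝ)/n) := by
          have hky' : (y + 1 : ℝ) ≤ k := by
            rw [hk]
            push_cast
            have := Nat.le_ceil y
            linarith
          have hxpos : (0:ℝ) < (D:ℝ)/n := by positivity
          have : (y + 1) * ((D:ℝ)/n) ≤ (k:ℝ) * ((D:ℝ)/n) := by gcongr
          have hyx : y * ((D:ℝ)/n) = Real.log F.card := by
            rw [hy]
            field_simp
          nlinarith
        have : (F.card : ℝ) = Real.exp (Real.log F.card) := by
          rw [Real.exp_log (by exact_mod_cast hm1)]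
        rw [this, ← Real.exp_add]
        rw [show Real.log ↑F.card + ↑k * -(↑D / ↑n) = Real.log ↑F.card - ↑k * (↑D / ↑n) by ring]
        calc Real.exp (Real.log ↑F.card - ↑k * (↑D / ↑n)) < Real.exp 0 := by
              apply Real.exp_lt_exp.mpr; linarith
          _ = 1 := Real.exp_zero
      calc (F.card : ℝ) * ((n:ℝ) - D)^k ≤ (F.card : ℝ) * (n^k * Real.exp (-((D:ℝ)/n))^k) := by
            apply mul_le_mul_of_nonneg_left h1 (by positivity)
        _ = ((F.card : ℝ) * Real.exp (-((D:ℝ)/n))^k) * n^k := by ring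
        _ < 1 * n^k := by
            apply mul_lt_mul_of_pos_right h2 (by positivity)
        _ = (n:ℝ)^k := by ring
  obtain ⟨R, hRc, hRhit⟩ := hit_aux hD k F hF hmain
  exact ⟨R, hRhit, le_trans (by exact_mod_cast hRc) hky⟩

lemma bfs_exists {V : Type*} [Fintype V] [DecidableEq V] (G : SimpleGraph V) (w : V) :
    ∃ Ew : Finset (Sym2 V), ↑Ew ⊆ G.edgeSet ∧ Ew.card ≤ Fintype.card V ∧
      ∀ t, G.Reachable w t → ∃ q : G.Walk w t, q.length ≤ G.dist w t ∧ ∀ e ∈ q.edges, e ∈ Ew := by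
  classical
  set P : V → Prop := fun t => ∃ s, G.Adj s t ∧ G.Reachable w s ∧ G.dist w s + 1 ≤ G.dist w t
    with hP
  set par : V → V := fun t => if h : P t then h.choose else t with hpardef
  have hpar : ∀ t, P t → G.Adj (par t) t ∧ G.Reachable w (par t) ∧
      G.dist w (par t) + 1 ≤ G.dist w t := by
    intro t ht
    have : par t = ht.choose := by simp only [hpardef, dif_pos ht]
    rw [this]
    exact ht.choose_spec
  refine ⟨(Finset.univ.filter P).image (fun t => s(par t, t)), ?_, ?_, ?_⟩
  · intro e he
    simp only [Finset.coe_image, Set.mem_image, Finset.mem_coe, Finset.mem_filter] at he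
    obtain ⟨t, ⟨-, ht⟩, rfl⟩ := he
    exact (hpar t ht).1
  · exact le_trans (Finset.card_image_le) (le_trans (Finset.card_filter_le _ _)
      (le_of_eq Finset.card_univ))
  · have main : ∀ (k : ℕ) (t : V), G.Reachable w t → G.dist w t = k →
        ∃ q : G.Walk w t, q.length ≤ G.dist w t ∧
          ∀ e ∈ q.edges, e ∈ (Finset.univ.filter P).image (fun t => s(par t, t)) := by
      intro k
      induction k using Nat.strong_induction_on with
      | _ k ih =>
        intro t hr hdist
        rcases Nat.eq_zero_or_pos k with rfl | hkpos
        · have : w = t := (hr.dist_eq_zero_iff).mp hdist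
          subst this
          exact ⟨SimpleGraph.Walk.nil, by simp, by simp⟩
        · obtain ⟨p, hp⟩ := hr.exists_walk_length_eq_dist
          have hpt : P t := by
            cases p with
            | nil => rw [SimpleGraph.dist_self] at hdist; omega
            | cons h' p' =>
              obtain ⟨x, q, hadj, heq⟩ := SimpleGraph.Walk.exists_cons_eq_concat h' p'
              refine ⟨x, hadj, ⟨q⟩, ?_⟩
              have hlen : q.length + 1 = G.dist w t := by
                rw [← hp, heq, SimpleGraph.Walk.length_concat]
              have := SimpleGraph.dist_le q
              omega
          obtain ⟨hadj, hreach, hdlt⟩ := hpar t hpt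
          obtain ⟨q0, hq0len, hq0e⟩ := ih (G.dist w (par t)) (by omega) (par t) hreach rfl
          refine ⟨q0.concat hadj, ?_, ?_⟩
          · rw [SimpleGraph.Walk.length_concat]
            omega
          · intro e he
            rw [SimpleGraph.Walk.edges_concat, List.concat_eq_append, List.mem_append,
              List.mem_singleton] at he
            rcases he with he | he
            · exact hq0e e he
            · rw [he]
              exact Finset.mem_image.mpr ⟨t, Finset.mem_filter.mpr ⟨Finset.mem_univ _, hpt⟩, rfl⟩
    intro t hr
    exact main (G.dist w t) t hr rfl

section Sec3

variable {V : Type*} {G : SimpleGraph V}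

lemma walk_between_getVert {u v : V} (p : G.Walk u v) (i k : ℕ) (h : i + k ≤ p.length) :
    ∃ q : G.Walk (p.getVert i) (p.getVert (i + k)), q.length = k := by
  induction k with
  | zero => exact ⟨SimpleGraph.Walk.nil, rfl⟩
  | succ k ih =>
    obtain ⟨q, hq⟩ := ih (by omega)
    have hadj : G.Adj (p.getVert (i + k)) (p.getVert (i + k + 1)) :=
      p.adj_getVert_succ (by omega)
    exact ⟨q.concat hadj, by simp [SimpleGraph.Walk.length_concat, hq]⟩

lemma geodesic_dist_getVert {u v : V} (p : G.Walk u v) (hgeo : p.length = G.dist u v)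
    (i j : ℕ) (hij : i ≤ j) (hj : j ≤ p.length) :
    G.dist (p.getVert i) (p.getVert j) = j - i := by
  obtain ⟨qmid0, hqmid⟩ := walk_between_getVert p i (j - i)
    (by omega)
  have hji : i + (j - i) = j := by omega
  let qmid : G.Walk (p.getVert i) (p.getVert j) := qmid0.copy rfl (by rw [hji])
  have hqmid : qmid.length = j - i := by
    simpa [qmid, SimpleGraph.Walk.length_copy] using hqmid
  have hle : G.dist (p.getVert i) (p.getVert j) ≤ j - i := hqmid ▸ SimpleGraph.dist_le qmid
  have hreach : G.Reachable (p.getVert i) (p.getVert j) := ⟨qmid⟩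
  obtain ⟨qd, hqd⟩ := hreach.exists_walk_length_eq_dist
  obtain ⟨q1, hq1⟩ := walk_between_getVert p 0 i (by omega)
  obtain ⟨q30, hq3⟩ := walk_between_getVert p j (p.length - j) (by omega)
  have hjj : j + (p.length - j) = p.length := by omega
  let q3 : G.Walk (p.getVert j) (p.getVert p.length) := q30.copy rfl (by rw [hjj])
  have hq3 : q3.length = p.length - j := by
    simpa [q3, SimpleGraph.Walk.length_copy] using hq3
  have e0 : p.getVert 0 = u := p.getVert_zero
  have eL : p.getVert p.length = v := p.getVert_length
  let q1' : G.Walk u (p.getVert i) := q1.copy e0 (by rw [Nat.zero_add])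
  let q3' : G.Walk (p.getVert j) v := q3.copy rfl eL
  let W : G.Walk u v := q1'.append (qd.append q3')
  have hWlen : W.length = i + (G.dist (p.getVert i) (p.getVert j) + (p.length - j)) := by
    simp only [W, q1', q3', SimpleGraph.Walk.length_copy, SimpleGraph.Walk.length_append]
    omega
  have hdle : G.dist u v ≤ W.length := SimpleGraph.dist_le W
  rw [hWlen, ← hgeo] at hdle
  omega

lemma geodesic_getVert_inj {u v : V} (p : G.Walk u v) (hgeo : p.length = G.dist u v)
    (i j : ℕ) (hij : i < j) (hj : j ≤ p.length) : p.getVert i ≠ p.getVert j := by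
  intro heq
  have := geodesic_dist_getVert p hgeo i j hij.le hj
  rw [heq] at this
  simp [SimpleGraph.dist_self] at this
  omega

lemma geodesic_window [DecidableEq V] {u v : V} (p : G.Walk u v)
    (hgeo : p.length = G.dist u v) (w : V) (A : Finset V)
    (hA : ∀ x ∈ A, x ∈ p.support ∧ G.Adj w x) : A.card ≤ 3 := by
  classical
  rcases A.eq_empty_or_nonempty with rfl | hAne
  · simp
  set f : V → ℕ := fun x => if h : ∃ i, p.getVert i = x ∧ i ≤ p.length then h.choose else 0
    with hf
  have hfspec : ∀ x ∈ A, p.getVert (f x) = x ∧ f x ≤ p.length := by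
    intro x hx
    have hex : ∃ i, p.getVert i = x ∧ i ≤ p.length :=
      SimpleGraph.Walk.mem_support_iff_exists_getVert.mp (hA x hx).1
    have : f x = hex.choose := by simp only [hf, dif_pos hex]
    rw [this]
    exact hex.choose_spec
  have hinj : Set.InjOn f A := by
    intro x hx y hy hxy
    have := (hfspec x hx).1
    rw [hxy, (hfspec y hy).1] at this
    exact this.symm
  have hdist2 : ∀ x ∈ A, ∀ y ∈ A, G.dist x y ≤ 2 := by
    intro x hx y hy
    have := SimpleGraph.dist_le
      (SimpleGraph.Walk.cons (hA x hx).2.symm (SimpleGraph.Walk.cons (hA y hy).2 .nil))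
    simpa using this
  have hwindow : ∀ x ∈ A, ∀ y ∈ A, f x ≤ f y → f y - f x ≤ 2 := by
    intro x hx y hy hle
    have hd := geodesic_dist_getVert p hgeo (f x) (f y) hle (hfspec y hy).2
    rw [(hfspec x hx).1, (hfspec y hy).1] at hd
    rw [← hd]
    exact hdist2 x hx y hy
  set I := A.image f with hI
  have hIne : I.Nonempty := hAne.image f
  set m := I.min' hIne with hm
  have hsub : I ⊆ Finset.Icc m (m + 2) := by
    intro j hj
    obtain ⟨y, hy, rfl⟩ := Finset.mem_image.mp hj
    obtain ⟨x, hx, hxm⟩ := Finset.mem_image.mp (I.min'_mem hIne)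
    refine Finset.mem_Icc.mpr ⟨?_, ?_⟩
    · exact I.min'_le _ hj
    · have hle : f x ≤ f y := by
        rw [hxm]
        exact I.min'_le _ hj
      have := hwindow x hx y hy hle
      rw [hxm] at this
      rw [hm]
      omega
  calc A.card = I.card := (Finset.card_image_of_injOn hinj).symm
    _ ≤ (Finset.Icc m (m + 2)).card := Finset.card_le_card hsub
    _ = 3 := by rw [Nat.card_Icc]; omega
end Sec3

section Sec4

variable {V : Type*} [DecidableEq V] {G : SimpleGraph V}

lemma exists_first_missing (E0 : Finset (Sym2 V)) {u v : V} (p : G.Walk u v)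
    (h : ∃ e ∈ p.edges, e ∉ E0) :
    ∃ (a b : V) (_ : G.Adj a b) (p₁ : G.Walk u a) (p₂ : G.Walk b v),
      (∀ e ∈ p₁.edges, e ∈ E0) ∧ s(a, b) ∉ E0 ∧
      p₁.length + 1 + p₂.length = p.length ∧
      (∀ e ∈ p₂.edges, e ∈ p.edges) ∧ s(a, b) ∈ p.edges := by
  induction p with
  | nil => simp at h
  | @cons u u' v hadj q ih =>
    by_cases he : s(u, u') ∈ E0
    · have hq : ∃ e ∈ q.edges, e ∉ E0 := by
        obtain ⟨e, hep, heE⟩ := h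
        rw [SimpleGraph.Walk.edges_cons, List.mem_cons] at hep
        rcases hep with rfl | hep
        · exact absurd he heE
        · exact ⟨e, hep, heE⟩
      obtain ⟨a, b, hab, p₁, p₂, hclean, hmiss, hlen, hsub, hmem⟩ := ih hq
      refine ⟨a, b, hab, SimpleGraph.Walk.cons hadj p₁, p₂, ?_, hmiss, ?_, ?_, ?_⟩
      · intro e hep
        rw [SimpleGraph.Walk.edges_cons, List.mem_cons] at hep
        rcases hep with rfl | hep
        · exact he
        · exact hclean e hep
      · simp only [SimpleGraph.Walk.length_cons]
        omega
      · intro e hep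
        rw [SimpleGraph.Walk.edges_cons, List.mem_cons]
        exact Or.inr (hsub e hep)
      · rw [SimpleGraph.Walk.edges_cons, List.mem_cons]
        exact Or.inr hmem
    · refine ⟨u, u', hadj, SimpleGraph.Walk.nil, q, by simp, he, ?_, ?_, ?_⟩
      · simp only [SimpleGraph.Walk.length_cons, SimpleGraph.Walk.length_nil]
        omega
      · intro e hep
        rw [SimpleGraph.Walk.edges_cons, List.mem_cons]
        exact Or.inr hep
      · rw [SimpleGraph.Walk.edges_cons, List.mem_cons]
        exact Or.inl rfl

lemma exists_last_missing (E0 : Finset (Sym2 V)) {u v : V} (p : G.Walk u v)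
    (h : ∃ e ∈ p.edges, e ∉ E0) :
    ∃ (x y : V) (_ : G.Adj x y) (r₁ : G.Walk u x) (r₂ : G.Walk y v),
      (∀ e ∈ r₂.edges, e ∈ E0) ∧ s(x, y) ∉ E0 ∧
      r₁.length + 1 + r₂.length = p.length ∧
      (∀ e ∈ r₁.edges, e ∈ p.edges) ∧ s(x, y) ∈ p.edges := by
  have hrev : ∃ e ∈ p.reverse.edges, e ∉ E0 := by
    obtain ⟨e, he, heE⟩ := h
    exact ⟨e, by rwa [SimpleGraph.Walk.edges_reverse, List.mem_reverse], heE⟩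
  obtain ⟨a, b, hab, p₁, p₂, hclean, hmiss, hlen, hsub, hmem⟩ :=
    exists_first_missing E0 p.reverse hrev
  refine ⟨b, a, hab.symm, p₂.reverse, p₁.reverse, ?_, ?_, ?_, ?_, ?_⟩
  · intro e hep
    rw [SimpleGraph.Walk.edges_reverse, List.mem_reverse] at hep
    exact hclean e hep
  · rwa [Sym2.eq_swap]
  · rw [SimpleGraph.Walk.length_reverse, SimpleGraph.Walk.length_reverse]
    rw [SimpleGraph.Walk.length_reverse] at hlen
    omega
  · intro e hep
    rw [SimpleGraph.Walk.edges_reverse, List.mem_reverse] at hep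
    have := hsub e hep
    rwa [SimpleGraph.Walk.edges_reverse, List.mem_reverse] at this
  · rw [Sym2.eq_swap]
    rwa [SimpleGraph.Walk.edges_reverse, List.mem_reverse] at hmem

lemma miss_le_touched (E0 : Finset (Sym2 V)) {u v : V} (p : G.Walk u v) (hp : p.IsPath) :
    (p.edges.toFinset.filter (fun e => e ∉ E0)).card ≤
      (p.support.toFinset.filter (fun x => ∃ e ∈ p.edges, e ∉ E0 ∧ x ∈ e)).card := by
  induction p with
  | nil => simp
  | @cons u u' v hadj q ih =>
    rw [SimpleGraph.Walk.cons_isPath_iff] at hp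
    obtain ⟨hqpath, hu⟩ := hp
    have hXsub : (q.support.toFinset.filter (fun x => ∃ e ∈ q.edges, e ∉ E0 ∧ x ∈ e)) ⊆
        ((SimpleGraph.Walk.cons hadj q).support.toFinset.filter
          (fun x => ∃ e ∈ (SimpleGraph.Walk.cons hadj q).edges, e ∉ E0 ∧ x ∈ e)) := by
      intro x hx
      rw [Finset.mem_filter] at hx ⊢
      obtain ⟨hxs, e, he, heE, hxe⟩ := hx
      refine ⟨?_, e, ?_, heE, hxe⟩
      · rw [List.mem_toFinset] at hxs ⊢
        rw [SimpleGraph.Walk.support_cons, List.mem_cons]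
        exact Or.inr hxs
      · rw [SimpleGraph.Walk.edges_cons, List.mem_cons]
        exact Or.inr he
    have hedges : (SimpleGraph.Walk.cons hadj q).edges.toFinset =
        insert s(u, u') q.edges.toFinset := by
      rw [SimpleGraph.Walk.edges_cons, List.toFinset_cons]
    by_cases he : s(u, u') ∈ E0
    · rw [hedges, Finset.filter_insert, if_neg (by simp [he])]
      exact le_trans (ih hqpath) (Finset.card_le_card hXsub)
    · rw [hedges, Finset.filter_insert, if_pos (by simp [he])]
      have hunotin : u ∉ (q.support.toFinset.filter
          (fun x => ∃ e ∈ q.edges, e ∉ E0 ∧ x ∈ e)) := by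
        intro hmem
        exact hu (List.mem_toFinset.mp (Finset.mem_filter.mp hmem).1)
      have huin : u ∈ ((SimpleGraph.Walk.cons hadj q).support.toFinset.filter
          (fun x => ∃ e ∈ (SimpleGraph.Walk.cons hadj q).edges, e ∉ E0 ∧ x ∈ e)) := by
        rw [Finset.mem_filter]
        refine ⟨?_, s(u, u'), ?_, he, ?_⟩
        · rw [List.mem_toFinset]
          exact SimpleGraph.Walk.start_mem_support _
        · rw [SimpleGraph.Walk.edges_cons, List.mem_cons]
          exact Or.inl rfl
        · simp
      have hins : insert u (q.support.toFinset.filter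
          (fun x => ∃ e ∈ q.edges, e ∉ E0 ∧ x ∈ e)) ⊆
          ((SimpleGraph.Walk.cons hadj q).support.toFinset.filter
            (fun x => ∃ e ∈ (SimpleGraph.Walk.cons hadj q).edges, e ∉ E0 ∧ x ∈ e)) := by
        intro x hx
        rcases Finset.mem_insert.mp hx with rfl | hx
        · exact huin
        · exact hXsub hx
      calc (insert s(u, u') (q.edges.toFinset.filter (fun e => e ∉ E0))).card
          ≤ (q.edges.toFinset.filter (fun e => e ∉ E0)).card + 1 := Finset.card_insert_le _ _
        _ ≤ (q.support.toFinset.filter (fun x => ∃ e ∈ q.edges, e ∉ E0 ∧ x ∈ e)).card + 1 := by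
            have := ih hqpath
            omega
        _ = (insert u (q.support.toFinset.filter
              (fun x => ∃ e ∈ q.edges, e ∉ E0 ∧ x ∈ e))).card := by
            rw [Finset.card_insert_of_notMem hunotin]
        _ ≤ _ := Finset.card_le_card hins

lemma deg_sum_le_three {W : Type*} [Fintype W] [DecidableEq W] (G : SimpleGraph W)
    [DecidableRel G.Adj] (X : Finset W) (B : ℕ)
    (hw : ∀ w : W, (X.filter (fun x => G.Adj x w)).card ≤ B) :
    ∑ x ∈ X, G.degree x ≤ B * (X.biUnion (fun x => G.neighborFinset x)).card := by
  classical
  set S := X.biUnion (fun x => G.neighborFinset x) with hS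
  have h1 : ∀ x ∈ X, G.degree x = ∑ w ∈ S, if G.Adj x w then 1 else 0 := by
    intro x hx
    have hfil : S.filter (fun w => G.Adj x w) = G.neighborFinset x := by
      ext w
      simp only [Finset.mem_filter, SimpleGraph.mem_neighborFinset]
      constructor
      · rintro ⟨-, h⟩; exact h
      · intro h
        refine ⟨?_, h⟩
        rw [hS]
        exact Finset.mem_biUnion.mpr ⟨x, hx, by simp [SimpleGraph.mem_neighborFinset, h]⟩
    rw [← SimpleGraph.card_neighborFinset_eq_degree, ← hfil, Finset.card_filter]
  calc ∑ x ∈ X, G.degree x = ∑ x ∈ X, ∑ w ∈ S, if G.Adj x w then 1 else 0 :=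
        Finset.sum_congr rfl h1
    _ = ∑ w ∈ S, ∑ x ∈ X, if G.Adj x w then 1 else 0 := Finset.sum_comm
    _ = ∑ w ∈ S, (X.filter (fun x => G.Adj x w)).card := by
        refine Finset.sum_congr rfl (fun w _ => ?_)
        rw [Finset.card_filter]
    _ ≤ ∑ _w ∈ S, B := Finset.sum_le_sum (fun w _ => hw w)
    _ = B * S.card := by rw [Finset.sum_const, smul_eq_mul, mul_comm]
end Sec4


lemma buy_exists {V : Type*} [DecidableEq V] (G : SimpleGraph V) (E0 : Finset (Sym2 V))
    (z : ℕ) (ctrP : V → V → Prop) :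
    ∃ buy : V → V → Finset (Sym2 V),
      (∀ c1 c2, (buy c1 c2).card ≤ z ∧ ∀ e ∈ buy c1 c2, e ∈ G.edgeSet) ∧
      ∀ c1 c2 (a b : V) (p : G.Walk a b), ctrP a c1 → ctrP b c2 →
        (p.edges.toFinset.filter (fun e => e ∉ E0)).card ≤ z →
        ∃ (a' b' : V) (q : G.Walk a' b'), ctrP a' c1 ∧ ctrP b' c2 ∧ q.length ≤ p.length ∧
          ∀ e ∈ q.edges, e ∈ E0 ∨ e ∈ buy c1 c2 := by
  classical
  have main : ∀ c1 c2 : V, ∃ B : Finset (Sym2 V), B.card ≤ z ∧ (∀ e ∈ B, e ∈ G.edgeSet) ∧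
      ∀ a b (p : G.Walk a b), ctrP a c1 → ctrP b c2 →
        (p.edges.toFinset.filter (fun e => e ∉ E0)).card ≤ z →
        ∃ (a' b' : V) (q : G.Walk a' b'), ctrP a' c1 ∧ ctrP b' c2 ∧ q.length ≤ p.length ∧
          ∀ e ∈ q.edges, e ∈ E0 ∨ e ∈ B := by
    intro c1 c2
    by_cases hne : ∃ x : Σ a : V, Σ b : V, G.Walk a b, ctrP x.1 c1 ∧ ctrP x.2.1 c2 ∧
        (x.2.2.edges.toFinset.filter (fun e => e ∉ E0)).card ≤ z
    · set L : Set ℕ := {k | ∃ x : Σ a : V, Σ b : V, G.Walk a b, (ctrP x.1 c1 ∧ ctrP x.2.1 c2 ∧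
        (x.2.2.edges.toFinset.filter (fun e => e ∉ E0)).card ≤ z) ∧ x.2.2.length = k} with hL
      have hLne : L.Nonempty := by
        obtain ⟨x, hx⟩ := hne
        exact ⟨x.2.2.length, x, hx, rfl⟩
      have hmem : sInf L ∈ L := Nat.sInf_mem hLne
      obtain ⟨x0, hx0, hx0len⟩ := hmem
      refine ⟨x0.2.2.edges.toFinset.filter (fun e => e ∉ E0), hx0.2.2, ?_, ?_⟩
      · intro e he
        rw [Finset.mem_filter, List.mem_toFinset] at he
        exact x0.2.2.edges_subset_edgeSet he.1
      · intro a b p hp1 hp2 hpz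
        refine ⟨x0.1, x0.2.1, x0.2.2, hx0.1, hx0.2.1, ?_, ?_⟩
        · rw [hx0len]
          exact Nat.sInf_le ⟨⟨a, b, p⟩, ⟨hp1, hp2, hpz⟩, rfl⟩
        · intro e he
          by_cases heE : e ∈ E0
          · exact Or.inl heE
          · exact Or.inr (Finset.mem_filter.mpr ⟨List.mem_toFinset.mpr he, heE⟩)
    · refine ⟨∅, by simp, by simp, ?_⟩
      intro a b p hp1 hp2 hpz
      exact absurd ⟨⟨a, b, p⟩, hp1, hp2, hpz⟩ hne
  choose buy h1 h2 h3 using main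
  exact ⟨buy, fun c1 c2 => ⟨h1 c1 c2, h2 c1 c2⟩, h3⟩

lemma spanner_construction {V : Type} [Fintype V] (G : SimpleGraph V) (c z : ℕ)
    (hc : 1 ≤ c) (hz : 1 ≤ z) :
    ∃ E : Finset (Sym2 V), ↑E ⊆ G.edgeSet ∧
      (∀ u v : V, (SimpleGraph.fromEdgeSet (E : Set (Sym2 V))).edist u v ≤ G.edist u v + 4) ∧
      (E.card : ℝ) ≤ (Fintype.card V) * (3*c) + Fintype.card V
        + z * (((Fintype.card V : ℝ) / (3*c)) * Real.log (Fintype.card V) + 2)^2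
        + (Fintype.card V) * (((Fintype.card V : ℝ) / (z*c)) * Real.log ((Fintype.card V)^2) + 2) := by
  classical
  letI : DecidableRel G.Adj := Classical.decRel _
  set n := Fintype.card V with hn
  set d := 3 * c with hd
  have hd1 : 1 ≤ d := by omega
  set heavy : V → Prop := fun x => d ≤ G.degree x with hheavy
  -- cluster centers
  set F1 : Finset (Finset V) := (Finset.univ.filter heavy).image (fun x => G.neighborFinset x)
    with hF1def
  have hF1size : ∀ S ∈ F1, d ≤ S.card := by
    intro S hS
    obtain ⟨x, hx, rfl⟩ := Finset.mem_image.mp hS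
    rw [SimpleGraph.card_neighborFinset_eq_degree]
    exact (Finset.mem_filter.mp hx).2
  obtain ⟨R1, hR1hit, hR1card⟩ := hitting hd1 F1 hF1size
  set ctr : V → V := fun x => if h : ∃ r ∈ R1, r ∈ G.neighborFinset x then h.choose else x
    with hctrdef
  have hctr : ∀ x, heavy x → G.Adj x (ctr x) ∧ ctr x ∈ R1 := by
    intro x hx
    have hex : ∃ r ∈ R1, r ∈ G.neighborFinset x :=
      hR1hit _ (Finset.mem_image.mpr ⟨x, Finset.mem_filter.mpr ⟨Finset.mem_univ _, hx⟩, rfl⟩)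
    have hc : ctr x = hex.choose := by simp only [hctrdef, dif_pos hex]
    rw [hc]
    obtain ⟨h1, h2⟩ := hex.choose_spec
    exact ⟨(SimpleGraph.mem_neighborFinset _ _ _).mp h2, h1⟩
  -- base edge set
  set Elight : Finset (Sym2 V) := G.edgeFinset.filter (fun e => ∃ x ∈ e, ¬ heavy x)
    with hElightdef
  set Estars : Finset (Sym2 V) := (Finset.univ.filter heavy).image (fun x => s(x, ctr x))
    with hEstarsdef
  set E0 : Finset (Sym2 V) := Elight ∪ Estars with hE0def
  have hE0sub : ∀ e ∈ E0, e ∈ G.edgeSet := by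
    intro e he
    rcases Finset.mem_union.mp he with he | he
    · exact SimpleGraph.mem_edgeFinset.mp (Finset.mem_filter.mp he).1
    · obtain ⟨x, hx, rfl⟩ := Finset.mem_image.mp he
      exact (hctr x (Finset.mem_filter.mp hx).2).1
  have hmissheavy : ∀ a b : V, G.Adj a b → s(a, b) ∉ E0 → heavy a ∧ heavy b := by
    intro a b hab hmiss
    by_contra hcon
    have : ∃ x ∈ s(a, b), ¬ heavy x := by
      rcases not_and_or.mp hcon with h | h
      · exact ⟨a, by simp, h⟩
      · exact ⟨b, by simp, h⟩
    exact hmiss (Finset.mem_union_left _ (Finset.mem_filter.mpr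
      ⟨SimpleGraph.mem_edgeFinset.mpr hab, this⟩))
  have hstar : ∀ x, heavy x → s(x, ctr x) ∈ E0 := by
    intro x hx
    exact Finset.mem_union_right _ (Finset.mem_image.mpr
      ⟨x, Finset.mem_filter.mpr ⟨Finset.mem_univ _, hx⟩, rfl⟩)
  -- buying
  set ctrP : V → V → Prop := fun a c0 => heavy a ∧ ctr a = c0 with hctrPdef
  obtain ⟨buy, hbuycard, hbuyuse⟩ := buy_exists G E0 z ctrP
  set Ebuy : Finset (Sym2 V) := (R1 ×ˢ R1).biUnion (fun cc => buy cc.1 cc.2) with hEbuydef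
  -- geodesics
  set geo : (u v : V) → G.Reachable u v → G.Walk u v :=
    fun u v h => (SimpleGraph.Reachable.exists_walk_length_eq_dist h).choose with hgeodef
  have hgeo : ∀ u v (h : G.Reachable u v), (geo u v h).length = G.dist u v :=
    fun u v h => (SimpleGraph.Reachable.exists_walk_length_eq_dist h).choose_spec
  set miss : ∀ a b : V, G.Walk a b → ℕ :=
    fun a b p => (p.edges.toFinset.filter (fun e => e ∉ E0)).card with hmissdef
  set badP : V → V → Prop := fun u v => ∃ h : G.Reachable u v, z ≤ miss u v (geo u v h)
    with hbadPdef
  set touched : ∀ a b : V, G.Walk a b → Finset V :=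
    fun a b p => p.support.toFinset.filter (fun x => ∃ e ∈ p.edges, e ∉ E0 ∧ x ∈ e)
    with htoucheddef
  set Sfun : V → V → Finset V := fun u v => if h : G.Reachable u v then
      (touched u v (geo u v h)).biUnion (fun x => G.neighborFinset x) else ∅ with hSfundef
  set F2 : Finset (Finset V) :=
    ((Finset.univ ×ˢ Finset.univ).filter (fun uv => badP uv.1 uv.2)).image
      (fun uv => Sfun uv.1 uv.2) with hF2def
  have htouchedheavy : ∀ (a b : V) (p : G.Walk a b), ∀ x ∈ touched a b p, heavy x := by
    intro a b p x hx
    simp only [htoucheddef, Finset.mem_filter] at hx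
    obtain ⟨hxs, e, he, heE0, hxe⟩ := hx
    obtain ⟨y, rfl⟩ := (Sym2.mem_iff_exists).mp hxe
    have hadj : G.Adj x y := (SimpleGraph.mem_edgeSet G).mp (p.edges_subset_edgeSet he)
    exact (hmissheavy x y hadj heE0).1
  have hF2size : ∀ S ∈ F2, z * c ≤ S.card := by
    intro S hS
    simp only [hF2def, Finset.mem_image, Finset.mem_filter] at hS
    obtain ⟨⟨u, v⟩, ⟨-, hbad⟩, rfl⟩ := hS
    obtain ⟨h, hzmiss⟩ := hbad
    simp only [hSfundef]
    rw [dif_pos h]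
    have hpath : (geo u v h).IsPath :=
      SimpleGraph.Walk.isPath_of_length_eq_dist _ (hgeo u v h)
    have hX1 : miss u v (geo u v h) ≤ (touched u v (geo u v h)).card := by
      simp only [hmissdef, htoucheddef]
      exact miss_le_touched E0 (geo u v h) hpath
    have hXz : z ≤ (touched u v (geo u v h)).card := le_trans hzmiss hX1
    have hXsup : ∀ x ∈ touched u v (geo u v h), x ∈ (geo u v h).support := by
      intro x hx
      simp only [htoucheddef, Finset.mem_filter] at hx
      exact List.mem_toFinset.mp hx.1
    have hdeg : ∀ x ∈ touched u v (geo u v h), d ≤ G.degree x :=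
      fun x hx => htouchedheavy u v (geo u v h) x hx
    have h3 : ∀ w : V, ((touched u v (geo u v h)).filter (fun x => G.Adj x w)).card ≤ 3 := by
      intro w
      apply geodesic_window (geo u v h) (hgeo u v h) w
      intro x hx
      rw [Finset.mem_filter] at hx
      exact ⟨hXsup x hx.1, hx.2.symm⟩
    have hsum1 : (touched u v (geo u v h)).card * d ≤
        ∑ x ∈ touched u v (geo u v h), G.degree x := by
      have := Finset.card_nsmul_le_sum (touched u v (geo u v h)) (fun x => G.degree x) d hdeg
      simpa [smul_eq_mul] using this
    have hsum2 : ∑ x ∈ touched u v (geo u v h), G.degree x ≤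
        3 * ((touched u v (geo u v h)).biUnion (fun x => G.neighborFinset x)).card :=
      deg_sum_le_three G _ 3 h3
    have hzd : z * d ≤ (touched u v (geo u v h)).card * d :=
      Nat.mul_le_mul_right _ hXz
    have hfin : 3 * (z * c) ≤
        3 * ((touched u v (geo u v h)).biUnion (fun x => G.neighborFinset x)).card := by
      calc 3 * (z * c) = z * d := by rw [hd]; ring
        _ ≤ (touched u v (geo u v h)).card * d := hzd
        _ ≤ ∑ x ∈ touched u v (geo u v h), G.degree x := hsum1
        _ ≤ _ := hsum2
    omega
  have hzc1 : 1 ≤ z * c := Nat.one_le_iff_ne_zero.mpr (by positivity)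
  obtain ⟨R2, hR2hit, hR2card⟩ := hitting hzc1 F2 hF2size
  -- BFS trees
  choose bfsE hbfs1 hbfs2 hbfs3 using (fun w => bfs_exists G w)
  set Ebfs : Finset (Sym2 V) := R2.biUnion bfsE with hEbfsdef
  -- Full edge set
  set E : Finset (Sym2 V) := E0 ∪ Ebuy ∪ Ebfs with hEdef
  have hEsub : ↑E ⊆ G.edgeSet := by
    intro e he
    rw [Finset.mem_coe, hEdef] at he
    rcases Finset.mem_union.mp he with he | he
    · rcases Finset.mem_union.mp he with he | he
      · exact hE0sub e he
      · obtain ⟨cc, -, hecc⟩ := Finset.mem_biUnion.mp he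
        exact (hbuycard cc.1 cc.2).2 e hecc
    · obtain ⟨w, -, hew⟩ := Finset.mem_biUnion.mp he
      exact hbfs1 w hew
  refine ⟨E, hEsub, ?_, ?_⟩
  · -- spanner property
    intro u v
    by_cases hr : G.Reachable u v
    · -- key: a short walk within E
      have key : ∃ p : G.Walk u v, p.length ≤ G.dist u v + 4 ∧ ∀ e ∈ p.edges, e ∈ E := by
        have hP : (geo u v hr).length = G.dist u v := hgeo u v hr
        by_cases h0 : ∃ e ∈ (geo u v hr).edges, e ∉ E0
        · by_cases hbig : z ≤ miss u v (geo u v hr)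
          · -- many missing edges: use a BFS tree from R2
            have hbad : badP u v := ⟨hr, hbig⟩
            have hSin : Sfun u v ∈ F2 := by
              rw [hF2def]
              exact Finset.mem_image.mpr ⟨(u, v), Finset.mem_filter.mpr
                ⟨Finset.mem_product.mpr ⟨Finset.mem_univ _, Finset.mem_univ _⟩, hbad⟩, rfl⟩
            obtain ⟨w, hwR2, hwS⟩ := hR2hit _ hSin
            simp only [hSfundef] at hwS
            rw [dif_pos hr] at hwS
            obtain ⟨x, hxX, hwN⟩ := Finset.mem_biUnion.mp hwS
            have hadj_xw : G.Adj x w := (SimpleGraph.mem_neighborFinset _ _ _).mp hwN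
            have hxsup : x ∈ (geo u v hr).support := by
              simp only [htoucheddef, Finset.mem_filter] at hxX
              exact List.mem_toFinset.mp hxX.1
            have hsplit : ((geo u v hr).takeUntil x hxsup).length +
                ((geo u v hr).dropUntil x hxsup).length = (geo u v hr).length := by
              rw [← SimpleGraph.Walk.length_append, SimpleGraph.Walk.take_spec]
            have hdux : G.dist u x ≤ ((geo u v hr).takeUntil x hxsup).length :=
              SimpleGraph.dist_le _
            have hdxv : G.dist x v ≤ ((geo u v hr).dropUntil x hxsup).length :=
              SimpleGraph.dist_le _
            have hrxu : G.Reachable x u := ⟨((geo u v hr).takeUntil x hxsup).reverse⟩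
            have hrxv : G.Reachable x v := ⟨(geo u v hr).dropUntil x hxsup⟩
            have hrwu : G.Reachable w u := SimpleGraph.Reachable.trans ⟨hadj_xw.symm.toWalk⟩ hrxu
            have hrwv : G.Reachable w v := SimpleGraph.Reachable.trans ⟨hadj_xw.symm.toWalk⟩ hrxv
            obtain ⟨q1, hq1len, hq1e⟩ := hbfs3 w u hrwu
            obtain ⟨q2, hq2len, hq2e⟩ := hbfs3 w v hrwv
            have hdwu : G.dist w u ≤ G.dist x u + 1 := by
              obtain ⟨g1, hg1⟩ := hrxu.exists_walk_length_eq_dist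
              have := SimpleGraph.dist_le (SimpleGraph.Walk.cons hadj_xw.symm g1)
              rw [SimpleGraph.Walk.length_cons, hg1] at this
              omega
            have hdwv : G.dist w v ≤ G.dist x v + 1 := by
              obtain ⟨g2, hg2⟩ := hrxv.exists_walk_length_eq_dist
              have := SimpleGraph.dist_le (SimpleGraph.Walk.cons hadj_xw.symm g2)
              rw [SimpleGraph.Walk.length_cons, hg2] at this
              omega
            refine ⟨q1.reverse.append q2, ?_, ?_⟩
            · rw [SimpleGraph.Walk.length_append, SimpleGraph.Walk.length_reverse]
              have hxu : G.dist x u = G.dist u x := SimpleGraph.dist_comm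
              rw [← hP]
              omega
            · intro e he
              rw [SimpleGraph.Walk.edges_append, List.mem_append,
                SimpleGraph.Walk.edges_reverse, List.mem_reverse] at he
              have hbw : e ∈ bfsE w := by
                rcases he with he | he
                · exact hq1e e he
                · exact hq2e e he
              rw [hEdef]
              exact Finset.mem_union_right _ (Finset.mem_biUnion.mpr ⟨w, hwR2, hbw⟩)
          · -- few missing edges: use bought cluster path
            push_neg at hbig
            obtain ⟨a, b, hab, p₁, p₂, hp1clean, habmiss, hlen1, hp2sub, habmem⟩ :=
              exists_first_missing E0 (geo u v hr) h0
            have hPab : ∃ e ∈ (SimpleGraph.Walk.cons hab p₂).edges, e ∉ E0 :=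
              ⟨s(a, b), by rw [SimpleGraph.Walk.edges_cons, List.mem_cons]; exact Or.inl rfl,
                habmiss⟩
            obtain ⟨x, y, hxy, r₁, r₂, hr2clean, hxymiss, hlen2, hr1sub, hxymem⟩ :=
              exists_last_missing E0 (SimpleGraph.Walk.cons hab p₂) hPab
            have hPabsub : ∀ e ∈ (SimpleGraph.Walk.cons hab p₂).edges, e ∈ (geo u v hr).edges := by
              intro e he
              rw [SimpleGraph.Walk.edges_cons, List.mem_cons] at he
              rcases he with rfl | he
              · exact habmem
              · exact hp2sub e he
            have hMedges : ∀ e ∈ (r₁.concat hxy).edges, e ∈ (geo u v hr).edges := by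
              intro e he
              rw [SimpleGraph.Walk.edges_concat, List.concat_eq_append, List.mem_append,
                List.mem_singleton] at he
              rcases he with he | rfl
              · exact hPabsub e (hr1sub e he)
              · exact hPabsub _ hxymem
            have hmissM : miss a y (r₁.concat hxy) ≤ z := by
              simp only [hmissdef]
              have hsub : (r₁.concat hxy).edges.toFinset.filter (fun e => e ∉ E0) ⊆
                  (geo u v hr).edges.toFinset.filter (fun e => e ∉ E0) := by
                apply Finset.filter_subset_filter
                intro e he
                rw [List.mem_toFinset] at he ⊢
                exact hMedges e he
              have := Finset.card_le_card hsub
              simp only [hmissdef] at hbig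
              omega
            have hheavya : heavy a := (hmissheavy a b hab habmiss).1
            have hheavyy : heavy y := (hmissheavy x y hxy hxymiss).2
            obtain ⟨a', b', q, hctra', hctrb', hqlen, hqedges⟩ :=
              hbuyuse (ctr a) (ctr y) a y (r₁.concat hxy) ⟨hheavya, rfl⟩ ⟨hheavyy, rfl⟩ hmissM
            -- star adjacencies
            have hac : G.Adj a (ctr a) := (hctr a hheavya).1
            have hca' : G.Adj (ctr a) a' := by
              rw [← hctra'.2]
              exact (hctr a' hctra'.1).1.symm
            have hb'c : G.Adj b' (ctr y) := by
              rw [← hctrb'.2]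
              exact (hctr b' hctrb'.1).1
            have hcy : G.Adj (ctr y) y := (hctr y hheavyy).1.symm
            refine ⟨p₁.append (SimpleGraph.Walk.cons hac (SimpleGraph.Walk.cons hca'
              (q.append (SimpleGraph.Walk.cons hb'c (SimpleGraph.Walk.cons hcy r₂))))), ?_, ?_⟩
            · simp only [SimpleGraph.Walk.length_append, SimpleGraph.Walk.length_cons]
              have hMlen : q.length ≤ r₁.length + 1 := by
                have : (r₁.concat hxy).length = r₁.length + 1 :=
                  SimpleGraph.Walk.length_concat _ _
                omega
              rw [SimpleGraph.Walk.length_cons] at hlen2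
              rw [← hP]
              omega
            · intro e he
              simp only [SimpleGraph.Walk.edges_append, SimpleGraph.Walk.edges_cons,
                List.mem_append, List.mem_cons] at he
              have hE0E : ∀ e' ∈ E0, e' ∈ E := by
                intro e' he'
                rw [hEdef]
                exact Finset.mem_union_left _ (Finset.mem_union_left _ he')
              rcases he with he | rfl | rfl | he | rfl | rfl | he
              · exact hE0E e (hp1clean e he)
              · exact hE0E _ (hstar a hheavya)
              · have : s(ctr a, a') = s(a', ctr a') := by
                  rw [Sym2.eq_swap, hctra'.2]
                rw [this]
                exact hE0E _ (hstar a' hctra'.1)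
              · rcases hqedges e he with he' | he'
                · exact hE0E e he'
                · rw [hEdef]
                  refine Finset.mem_union_left _ (Finset.mem_union_right _ ?_)
                  rw [hEbuydef]
                  refine Finset.mem_biUnion.mpr ⟨(ctr a, ctr y), ?_, he'⟩
                  exact Finset.mem_product.mpr ⟨(hctr a hheavya).2, (hctr y hheavyy).2⟩
              · have : s(b', ctr y) = s(b', ctr b') := by rw [hctrb'.2]
                rw [this]
                exact hE0E _ (hstar b' hctrb'.1)
              · have : s(ctr y, y) = s(y, ctr y) := Sym2.eq_swap
                rw [this]
                exact hE0E _ (hstar y hheavyy)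
              · exact hE0E e (hr2clean e he)
        · push_neg at h0
          refine ⟨geo u v hr, by omega, fun e he => ?_⟩
          rw [hEdef]
          exact Finset.mem_union_left _ (Finset.mem_union_left _ (h0 e he))
      obtain ⟨p, hplen, hpe⟩ := key
      have hpe' : ∀ e ∈ p.edges, e ∈ (SimpleGraph.fromEdgeSet (E : Set (Sym2 V))).edgeSet := by
        intro e he
        rw [SimpleGraph.edgeSet_fromEdgeSet]
        exact ⟨hpe e he, SimpleGraph.not_isDiag_of_mem_edgeSet G (p.edges_subset_edgeSet he)⟩
      have hedist : (SimpleGraph.fromEdgeSet (E : Set (Sym2 V))).edist u v ≤ p.length :=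
        (p.transfer _ hpe').edist_le.trans_eq (by rw [SimpleGraph.Walk.length_transfer])
      have hGedist : (G.dist u v : ℕ∞) = G.edist u v :=
        ENat.coe_toNat (SimpleGraph.edist_ne_top_iff_reachable.mpr hr)
      calc (SimpleGraph.fromEdgeSet (E : Set (Sym2 V))).edist u v ≤ (p.length : ℕ∞) := hedist
        _ ≤ ((G.dist u v + 4 : ℕ) : ℕ∞) := by exact_mod_cast hplen
        _ = G.edist u v + 4 := by
            push_cast
            rw [hGedist]
      done
    · rw [SimpleGraph.edist_eq_top_of_not_reachable hr]
      exact le_top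
  · -- cardinality
    have hElight_card : Elight.card ≤ n * d := by
      have hsub : Elight ⊆ (Finset.univ.filter (fun x => ¬ heavy x)).biUnion
          (fun x => G.incidenceFinset x) := by
        intro e he
        rw [hElightdef, Finset.mem_filter] at he
        obtain ⟨heG, x, hxe, hxl⟩ := he
        refine Finset.mem_biUnion.mpr ⟨x, Finset.mem_filter.mpr ⟨Finset.mem_univ _, hxl⟩, ?_⟩
        rw [SimpleGraph.mem_incidenceFinset]
        exact ⟨SimpleGraph.mem_edgeFinset.mp heG, hxe⟩
      calc Elight.card ≤ ((Finset.univ.filter (fun x => ¬ heavy x)).biUnion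
            (fun x => G.incidenceFinset x)).card := Finset.card_le_card hsub
        _ ≤ ∑ x ∈ Finset.univ.filter (fun x => ¬ heavy x), (G.incidenceFinset x).card :=
            Finset.card_biUnion_le
        _ ≤ ∑ _x ∈ Finset.univ.filter (fun x => ¬ heavy x), d := by
            refine Finset.sum_le_sum (fun x hx => ?_)
            rw [SimpleGraph.card_incidenceFinset_eq_degree]
            have := (Finset.mem_filter.mp hx).2
            simp only [hheavy] at this
            omega
        _ = (Finset.univ.filter (fun x => ¬ heavy x)).card * d := by
            rw [Finset.sum_const, smul_eq_mul]
        _ ≤ n * d := by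
            have : (Finset.univ.filter (fun x => ¬ heavy x)).card ≤ n := by
              rw [hn]
              exact le_trans (Finset.card_filter_le _ _) (le_of_eq Finset.card_univ)
            exact Nat.mul_le_mul_right _ this
    have hEstars_card : Estars.card ≤ n := by
      rw [hEstarsdef, hn]
      exact le_trans Finset.card_image_le
        (le_trans (Finset.card_filter_le _ _) (le_of_eq Finset.card_univ))
    have hEbuy_card : Ebuy.card ≤ R1.card * R1.card * z := by
      rw [hEbuydef]
      calc ((R1 ×ˢ R1).biUnion (fun cc => buy cc.1 cc.2)).card
          ≤ ∑ cc ∈ R1 ×ˢ R1, (buy cc.1 cc.2).card := Finset.card_biUnion_le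
        _ ≤ ∑ _cc ∈ R1 ×ˢ R1, z := Finset.sum_le_sum (fun cc _ => (hbuycard cc.1 cc.2).1)
        _ = (R1.card * R1.card) * z := by
            rw [Finset.sum_const, smul_eq_mul, Finset.card_product]
    have hEbfs_card : Ebfs.card ≤ R2.card * n := by
      rw [hEbfsdef]
      calc (R2.biUnion bfsE).card ≤ ∑ w ∈ R2, (bfsE w).card := Finset.card_biUnion_le
        _ ≤ ∑ _w ∈ R2, n := Finset.sum_le_sum (fun w _ => hbfs2 w)
        _ = R2.card * n := by rw [Finset.sum_const, smul_eq_mul]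
    have hEcard : E.card ≤ Elight.card + Estars.card + Ebuy.card + Ebfs.card := by
      rw [hEdef, hE0def]
      calc ((Elight ∪ Estars ∪ Ebuy) ∪ Ebfs).card
          ≤ (Elight ∪ Estars ∪ Ebuy).card + Ebfs.card := Finset.card_union_le _ _
        _ ≤ ((Elight ∪ Estars).card + Ebuy.card) + Ebfs.card := by
            have := Finset.card_union_le (Elight ∪ Estars) Ebuy
            omega
        _ ≤ _ := by
            have := Finset.card_union_le Elight Estars
            omega
    -- real number bounds
    have hnlog : ∀ a b : ℕ, a ≤ b → Real.log a ≤ Real.log b := by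
      intro a b hab
      rcases Nat.eq_zero_or_pos a with rfl | ha
      · simp only [Nat.cast_zero, Real.log_zero]
        rcases Nat.eq_zero_or_pos b with rfl | hb
        · simp
        · exact Real.log_nonneg (by exact_mod_cast hb)
      · exact Real.log_le_log (by exact_mod_cast ha) (by exact_mod_cast hab)
    have hF1n : F1.card ≤ n := by
      rw [hF1def, hn]
      exact le_trans Finset.card_image_le
        (le_trans (Finset.card_filter_le _ _) (le_of_eq Finset.card_univ))
    have hF2n : F2.card ≤ n^2 := by
      rw [hF2def, hn]
      refine le_trans Finset.card_image_le (le_trans (Finset.card_filter_le _ _) ?_)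
      rw [Finset.card_product, Finset.card_univ]
      ring_nf
      exact le_refl _
    have hndnn : (0:ℝ) ≤ (n:ℝ) / (3*c) := by positivity
    have hR1b : (R1.card : ℝ) ≤ ((n:ℝ) / (3*c)) * Real.log n + 2 := by
      refine le_trans hR1card ?_
      have h1 : Real.log F1.card ≤ Real.log n := hnlog _ _ hF1n
      have h2 : ((Fintype.card V : ℝ)) / (d:ℝ) = (n:ℝ) / (3*c) := by
        rw [← hn, hd]
        push_cast
        ring
      rw [h2]
      nlinarith [Real.log_natCast_nonneg F1.card]
    have hR2b : (R2.card : ℝ) ≤ ((n:ℝ) / ((z:ℝ)*c)) * Real.log ((n:ℝ)^2) + 2 := by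
      refine le_trans hR2card ?_
      have h1 : Real.log F2.card ≤ Real.log ((n:ℝ)^2) := by
        have := hnlog _ _ hF2n
        rwa [Nat.cast_pow] at this
      have h2 : ((Fintype.card V : ℝ)) / ((z*c : ℕ):ℝ) = (n:ℝ) / ((z:ℝ)*c) := by
        rw [← hn]
        push_cast
        ring
      have h3 : (0:ℝ) ≤ (n:ℝ) / ((z:ℝ)*c) := by positivity
      rw [h2]
      nlinarith [Real.log_natCast_nonneg F2.card]
    have hcast : (E.card : ℝ) ≤ (Elight.card : ℝ) + Estars.card + Ebuy.card + Ebfs.card := by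
      exact_mod_cast hEcard
    have hb1 : (Elight.card : ℝ) ≤ (n:ℝ) * (3*c) := by
      have : (Elight.card : ℝ) ≤ ((n * d : ℕ) : ℝ) := by exact_mod_cast hElight_card
      refine le_trans this (le_of_eq ?_)
      rw [hd]
      push_cast
      ring
    have hb2 : (Estars.card : ℝ) ≤ (n:ℝ) := by exact_mod_cast hEstars_card
    have hb3 : (Ebuy.card : ℝ) ≤ (z:ℝ) * (((n:ℝ) / (3*c)) * Real.log n + 2)^2 := by
      have h1 : (Ebuy.card : ℝ) ≤ (R1.card : ℝ) * (R1.card : ℝ) * (z:ℝ) := by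
        exact_mod_cast hEbuy_card
      have hnn : (0:ℝ) ≤ (R1.card : ℝ) := Nat.cast_nonneg _
      have h2 : (R1.card : ℝ) * (R1.card : ℝ) ≤
          (((n:ℝ) / (3*c)) * Real.log n + 2)^2 := by
        rw [sq]
        exact mul_le_mul hR1b hR1b hnn (le_trans hnn hR1b)
      calc (Ebuy.card : ℝ) ≤ (R1.card : ℝ) * (R1.card : ℝ) * (z:ℝ) := h1
        _ ≤ (((n:ℝ) / (3*c)) * Real.log n + 2)^2 * (z:ℝ) :=
            mul_le_mul_of_nonneg_right h2 (Nat.cast_nonneg _)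
        _ = (z:ℝ) * (((n:ℝ) / (3*c)) * Real.log n + 2)^2 := by ring
    have hb4 : (Ebfs.card : ℝ) ≤ (n:ℝ) * (((n:ℝ) / ((z:ℝ)*c)) * Real.log ((n:ℝ)^2) + 2) := by
      have h1 : (Ebfs.card : ℝ) ≤ (R2.card : ℝ) * (n:ℝ) := by exact_mod_cast hEbfs_card
      calc (Ebfs.card : ℝ) ≤ (R2.card : ℝ) * (n:ℝ) := h1
        _ ≤ (((n:ℝ) / ((z:ℝ)*c)) * Real.log ((n:ℝ)^2) + 2) * (n:ℝ) :=
            mul_le_mul_of_nonneg_right hR2b (Nat.cast_nonneg _)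
        _ = (n:ℝ) * (((n:ℝ) / ((z:ℝ)*c)) * Real.log ((n:ℝ)^2) + 2) := by ring
    have hfinal := add_le_add (add_le_add (add_le_add hb1 hb2) hb3) hb4
    exact le_trans hcast hfinal

set_option maxHeartbeats 1000000 in
theorem four_additive_spanner_exists :
    ∃ C : ℝ, 0 < C ∧
      ∀ (V : Type) [Fintype V] (G : SimpleGraph V),
        2 ≤ Fintype.card V →
        ∃ H : SimpleGraph V, IsAdditiveSpanner G H 4 ∧
          (H.edgeSet.ncard : ℝ) ≤
            C * (Fintype.card V : ℝ) ^ (7 / 5 : ℝ) *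
              (Real.log (Fintype.card V)) ^ (3 / 5 : ℝ) := by
  refine ⟨100, by norm_num, ?_⟩
  intro V _ G hV2
  set n := Fintype.card V with hn
  set L := Real.log n with hL
  have hn2 : (2:ℝ) ≤ (n:ℝ) := by exact_mod_cast hV2
  have hn0 : (0:ℝ) < (n:ℝ) := by linarith
  have hn1 : (1:ℝ) ≤ (n:ℝ) := by linarith
  have hlog2 : (1/2 : ℝ) < Real.log 2 := by
    have := Real.log_two_gt_d9
    norm_num at this ⊢
    linarith
  have hLhalf : (1/2 : ℝ) ≤ L := by
    have : Real.log 2 ≤ L := Real.log_le_log (by norm_num) hn2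
    linarith
  have hL0 : (0:ℝ) < L := by linarith
  have hLn : L ≤ (n:ℝ) := by
    have := Real.log_le_sub_one_of_pos hn0
    rw [hL] at *
    linarith
  -- parameters
  set A : ℝ := (n:ℝ)^((2:ℝ)/5) * L^((3:ℝ)/5) with hA
  set B : ℝ := (n:ℝ)^((1:ℝ)/5) * L^(-((1:ℝ)/5)) with hB
  have hA0 : 0 < A := by positivity
  have hB0 : 0 < B := by positivity
  -- basic rpow facts
  have hpow_half : ∀ e : ℝ, 0 ≤ e → e ≤ 1 → (1/2 : ℝ) ≤ L^e := by
    intro e he0 he1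
    have h1 : ((1:ℝ)/2)^e ≤ L^e := Real.rpow_le_rpow (by norm_num) hLhalf he0
    have h2 : ((1:ℝ)/2)^(1:ℝ) ≤ ((1:ℝ)/2)^e :=
      Real.rpow_le_rpow_of_exponent_ge (by norm_num) (by norm_num) he1
    rw [Real.rpow_one] at h2
    linarith
  have hpow_one : ∀ e : ℝ, 0 ≤ e → (1:ℝ) ≤ (n:ℝ)^e := by
    intro e he0
    have := Real.rpow_le_rpow (by norm_num) hn1 he0
    rwa [Real.one_rpow] at this
  have hAhalf : (1/2 : ℝ) ≤ A := by
    have h1 := hpow_one ((2:ℝ)/5) (by norm_num)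
    have h2 := hpow_half ((3:ℝ)/5) (by norm_num) (by norm_num)
    rw [hA]
    nlinarith
  have hB1 : (1:ℝ) ≤ B := by
    have h1 : L^((1:ℝ)/5) ≤ (n:ℝ)^((1:ℝ)/5) := Real.rpow_le_rpow hL0.le hLn (by norm_num)
    have h2 : (0:ℝ) < L^((1:ℝ)/5) := Real.rpow_pos_of_pos hL0 _
    rw [hB, Real.rpow_neg hL0.le, ← div_eq_mul_inv]
    rw [le_div_iff₀ h2]
    linarith
  set c := ⌈A⌉₊ with hc
  set z := ⌈B⌉₊ with hz
  have hc1 : 1 ≤ c := Nat.one_le_ceil_iff.mpr hA0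
  have hz1 : 1 ≤ z := by
    rw [hz]
    exact Nat.one_le_ceil_iff.mpr hB0
  have hcA : A ≤ (c:ℝ) := Nat.le_ceil A
  have hzB : B ≤ (z:ℝ) := Nat.le_ceil B
  have hcA3 : (c:ℝ) ≤ 3*A := by
    have := Nat.ceil_lt_add_one hA0.le
    have : (c:ℝ) < A + 1 := by exact_mod_cast this
    linarith
  have hzB2 : (z:ℝ) ≤ 2*B := by
    have := Nat.ceil_lt_add_one hB0.le
    have : (z:ℝ) < B + 1 := by exact_mod_cast this
    linarith
  obtain ⟨E, hEsub, hspan, hcard⟩ := spanner_construction G c z hc1 hz1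
  refine ⟨SimpleGraph.fromEdgeSet ↑E, ⟨?_, hspan⟩, ?_⟩
  · calc SimpleGraph.fromEdgeSet (E : Set (Sym2 V)) ≤ SimpleGraph.fromEdgeSet G.edgeSet :=
        SimpleGraph.fromEdgeSet_mono hEsub
      _ = G := SimpleGraph.fromEdgeSet_edgeSet G
  · -- cardinality
    have hncard : ((SimpleGraph.fromEdgeSet (E : Set (Sym2 V))).edgeSet.ncard : ℝ) ≤ E.card := by
      have hsub : (SimpleGraph.fromEdgeSet (E : Set (Sym2 V))).edgeSet ⊆ (E : Set (Sym2 V)) := by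
        rw [SimpleGraph.edgeSet_fromEdgeSet]
        exact Set.diff_subset
      have := Set.ncard_le_ncard hsub (Set.toFinite _)
      rw [Set.ncard_coe_finset] at this
      exact_mod_cast this
    refine le_trans hncard (le_trans hcard ?_)
    -- now pure real arithmetic
    set T : ℝ := (n:ℝ)^((7:ℝ)/5) * L^((3:ℝ)/5) with hT
    have hT0 : 0 < T := by positivity
    -- rpow product identities
    have hrn : ∀ a b : ℝ, (n:ℝ)^a * (n:ℝ)^b = (n:ℝ)^(a+b) := fun a b =>
      (Real.rpow_add hn0 a b).symm
    have hrL : ∀ a b : ℝ, L^a * L^b = L^(a+b) := fun a b => (Real.rpow_add hL0 a b).symm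
    have hn75 : (n:ℝ) * (n:ℝ)^((2:ℝ)/5) = (n:ℝ)^((7:ℝ)/5) := by
      nth_rewrite 1 [← Real.rpow_one (n:ℝ)]
      rw [hrn]
      norm_num
    -- Term 1 : n * (3c) ≤ 9 T
    have ht1 : (n:ℝ) * (3*(c:ℝ)) ≤ 9 * T := by
      have : (n:ℝ) * (3*(c:ℝ)) ≤ (n:ℝ) * (9*A) := by
        have h9 : 3*(c:ℝ) ≤ 9*A := by linarith
        exact mul_le_mul_of_nonneg_left h9 hn0.le
      refine le_trans this (le_of_eq ?_)
      rw [hT, hA, ← hn75]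
      ring
    -- Term 2 : n ≤ 2 T
    have ht2 : (n:ℝ) ≤ 2 * T := by
      have h1 : (n:ℝ) ≤ (n:ℝ)^((7:ℝ)/5) := by
        nth_rewrite 1 [← Real.rpow_one (n:ℝ)]
        exact Real.rpow_le_rpow_of_exponent_le hn1 (by norm_num)
      have h2 := hpow_half ((3:ℝ)/5) (by norm_num) (by norm_num)
      have h3 : (0:ℝ) < (n:ℝ)^((7:ℝ)/5) := by positivity
      rw [hT]
      nlinarith
    -- Term 3
    set R : ℝ := (n:ℝ)^((3:ℝ)/5) * L^((2:ℝ)/5) / 3 with hR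
    have hR6 : (1/6 : ℝ) ≤ R := by
      have h1 := hpow_one ((3:ℝ)/5) (by norm_num)
      have h2 := hpow_half ((2:ℝ)/5) (by norm_num) (by norm_num)
      rw [hR]
      nlinarith
    have hRid : (n:ℝ) / (3*A) * L = R := by
      rw [div_mul_eq_mul_div, div_eq_iff (by positivity : (3:ℝ)*A ≠ 0), hR, hA]
      calc (n:ℝ) * L = ((n:ℝ)^((3:ℝ)/5) * (n:ℝ)^((2:ℝ)/5)) * (L^((2:ℝ)/5) * L^((3:ℝ)/5)) := by
            rw [hrn, hrL]
            norm_num [Real.rpow_one]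
        _ = (n:ℝ)^((3:ℝ)/5) * L^((2:ℝ)/5) / 3 * (3 * ((n:ℝ)^((2:ℝ)/5) * L^((3:ℝ)/5))) := by
            ring
    have hdivc : (n:ℝ) / (3*(c:ℝ)) ≤ (n:ℝ) / (3*A) := by
      apply div_le_div_of_nonneg_left hn0.le (by positivity)
      linarith
    have ht3 : (z:ℝ) * (((n:ℝ) / (3*(c:ℝ))) * L + 2)^2 ≤ 38 * T := by
      have hq : ((n:ℝ) / (3*(c:ℝ))) * L + 2 ≤ 13 * R := by
        have h1 : ((n:ℝ) / (3*(c:ℝ))) * L ≤ R := by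
          rw [← hRid]
          exact mul_le_mul_of_nonneg_right hdivc hL0.le
        linarith
      have hq0 : (0:ℝ) ≤ ((n:ℝ) / (3*(c:ℝ))) * L + 2 := by positivity
      have hsq : (((n:ℝ) / (3*(c:ℝ))) * L + 2)^2 ≤ 169 * R^2 := by nlinarith
      have hX2 : ((n:ℝ)^((3:ℝ)/5) * L^((2:ℝ)/5))^2 = (n:ℝ)^((6:ℝ)/5) * L^((4:ℝ)/5) := by
        calc ((n:ℝ)^((3:ℝ)/5) * L^((2:ℝ)/5))^2
            = ((n:ℝ)^((3:ℝ)/5) * (n:ℝ)^((3:ℝ)/5)) * (L^((2:ℝ)/5) * L^((2:ℝ)/5)) := by ring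
          _ = (n:ℝ)^((6:ℝ)/5) * L^((4:ℝ)/5) := by
              rw [hrn, hrL]
              norm_num
      have hBX : B * ((n:ℝ)^((6:ℝ)/5) * L^((4:ℝ)/5)) = T := by
        rw [hB, hT]
        calc (n:ℝ)^((1:ℝ)/5) * L^(-((1:ℝ)/5)) * ((n:ℝ)^((6:ℝ)/5) * L^((4:ℝ)/5))
            = ((n:ℝ)^((1:ℝ)/5) * (n:ℝ)^((6:ℝ)/5)) * (L^(-((1:ℝ)/5)) * L^((4:ℝ)/5)) := by ring
          _ = (n:ℝ)^((7:ℝ)/5) * L^((3:ℝ)/5) := by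
              rw [hrn, hrL]
              norm_num
      have hBRT : B * R^2 = T / 9 := by
        have hRX : R^2 = ((n:ℝ)^((6:ℝ)/5) * L^((4:ℝ)/5)) / 9 := by
          rw [hR, div_pow, hX2]
          norm_num
        rw [hRX, ← hBX]
        ring
      calc (z:ℝ) * (((n:ℝ) / (3*(c:ℝ))) * L + 2)^2 ≤ (2*B) * (169 * R^2) := by
            have hz0 : (0:ℝ) ≤ (z:ℝ) := Nat.cast_nonneg _
            nlinarith [sq_nonneg R, hB0]
        _ = 338 * (B * R^2) := by ring
        _ = 338 * (T/9) := by rw [hBRT]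
        _ ≤ 38 * T := by linarith
    -- Term 4
    have ht4 : (n:ℝ) * (((n:ℝ) / ((z:ℝ)*(c:ℝ))) * Real.log ((n:ℝ)^2) + 2) ≤ 6 * T := by
      have hlogsq : Real.log ((n:ℝ)^2) = 2 * L := by
        rw [hL, Real.log_pow]
        push_cast
        ring
      set P : ℝ := (n:ℝ)^((3:ℝ)/5) * L^((2:ℝ)/5) with hP
      have hP0 : 0 < P := by positivity
      have hABP : A * B = P := by
        rw [hA, hB, hP]
        calc (n:ℝ)^((2:ℝ)/5) * L^((3:ℝ)/5) * ((n:ℝ)^((1:ℝ)/5) * L^(-((1:ℝ)/5)))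
            = ((n:ℝ)^((2:ℝ)/5) * (n:ℝ)^((1:ℝ)/5)) * (L^((3:ℝ)/5) * L^(-((1:ℝ)/5))) := by ring
          _ = P := by
              rw [hrn, hrL, hP]
              norm_num
      have hzcP : P ≤ (z:ℝ)*(c:ℝ) := by
        rw [← hABP]
        calc A * B ≤ (c:ℝ) * (z:ℝ) := mul_le_mul hcA hzB hB0.le (Nat.cast_nonneg _)
          _ = (z:ℝ)*(c:ℝ) := by ring
      have hdivP : (n:ℝ) / ((z:ℝ)*(c:ℝ)) ≤ (n:ℝ) / P :=
        div_le_div_of_nonneg_left hn0.le hP0 hzcP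
      have hPid : (n:ℝ) / P * (2*L) = 2*A := by
        rw [div_mul_eq_mul_div, div_eq_iff hP0.ne', hP, hA]
        calc (n:ℝ) * (2*L) = 2 * (((n:ℝ)^((2:ℝ)/5) * (n:ℝ)^((3:ℝ)/5)) *
              (L^((3:ℝ)/5) * L^((2:ℝ)/5))) := by
              rw [hrn, hrL]
              norm_num [Real.rpow_one]
              ring
          _ = 2 * ((n:ℝ)^((2:ℝ)/5) * L^((3:ℝ)/5)) * ((n:ℝ)^((3:ℝ)/5) * L^((2:ℝ)/5)) := by ring
      have hmain : ((n:ℝ) / ((z:ℝ)*(c:ℝ))) * Real.log ((n:ℝ)^2) + 2 ≤ 6*A := by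
        rw [hlogsq]
        have h1 : ((n:ℝ) / ((z:ℝ)*(c:ℝ))) * (2*L) ≤ (n:ℝ)/P * (2*L) :=
          mul_le_mul_of_nonneg_right hdivP (by positivity)
        rw [hPid] at h1
        linarith
      calc (n:ℝ) * (((n:ℝ) / ((z:ℝ)*(c:ℝ))) * Real.log ((n:ℝ)^2) + 2) ≤ (n:ℝ) * (6*A) :=
            mul_le_mul_of_nonneg_left hmain hn0.le
        _ = 6 * T := by
            rw [hT, hA, ← hn75]
            ring
    have hsum := add_le_add (add_le_add (add_le_add ht1 ht2) ht3) ht4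
    have hfin : (100:ℝ) * (n:ℝ)^((7:ℝ)/5) * L^((3:ℝ)/5) = 100 * T := by rw [hT]; ring
    calc (n:ℝ) * (3*(c:ℝ)) + (n:ℝ) + (z:ℝ) * (((n:ℝ) / (3*(c:ℝ))) * L + 2)^2
          + (n:ℝ) * (((n:ℝ) / ((z:ℝ)*(c:ℝ))) * Real.log ((n:ℝ)^2) + 2)
        ≤ 9*T + 2*T + 38*T + 6*T := hsum
      _ ≤ 100 * T := by linarith
      _ = 100 * (n:ℝ)^((7:ℝ)/5) * L^((3:ℝ)/5) := by rw [hT]; ring
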